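/- Let A = (Σ, Q, I, Δ, F) be a nondeterministic finite automaton over a finite linearly ordered alphabet Σ, ℓ a natural number, and w ∈ L(A) with |w| = ℓ. Suppose there exists a word w'' ∈ L(A) with |w''| = ℓ and w <_LEX w'', and let w' be the lexicographically least such word. Let i be the unique index with w.take(i) = w'.take(i) and w[i] ≠ w'[i]. Then: (a) w[i] < w'[i]; (b) i is the largest index j < ℓ such that there exist a letter a > w[j] and a word v of length ℓ−1−j with (w.take(j))·a·v ∈ L(A); (c) w'[i] is the least letter a > w[i] such that there exists a word v of length ℓ−1−i with (w.take(i))·a·v ∈ L(A); (d) the suffix w'.drop(i+1) is the lexicographically least word v of length ℓ−1−i such that (w.take(i))·w'[i]·v ∈ L(A). -/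

import Mathlib

/-- `AcceptsFrom Δ F q w`: the word `w` is accepted from state `q`. -/
def AcceptsFrom {Q A : Type*} (Δ : Set (Q × A × Q)) (F : Set Q) : Q → List A → Prop
  | q, [] => q ∈ F
  | q, a :: w => ∃ q', (q, a, q') ∈ Δ ∧ AcceptsFrom Δ F q' w

/-- `w ∈ L(A)`: `w` is accepted from some initial state. -/
def InLang {Q A : Type*} (Δ : Set (Q × A × Q)) (I F : Set Q) (w : List A) : Prop :=
  ∃ q ∈ I, AcceptsFrom Δ F q w

/-- `w ≤_LEX w'`: nonstrict lexicographic order on words. -/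
def LexLe {A : Type*} [LinearOrder A] (w w' : List A) : Prop :=
  w = w' ∨ List.Lex (· < ·) w w'

private lemma lex_asymm' {A : Type*} [LinearOrder A] :
    ∀ {x y : List A}, List.Lex (·<·) x y → List.Lex (·<·) y x → False := by
  intro x y h1
  induction h1 with
  | nil => intro h2; cases h2
  | @cons a l1 l2 h ih =>
    intro h2
    rw [List.lex_cons_iff] at h2
    exact ih h2
  | @rel a l1 b l2 h =>
    intro h2
    cases h2 with
    | cons => exact absurd h (lt_irrefl _)
    | rel h' => exact absurd h' (lt_asymm h)

private lemma lex_append_left_iff' {A : Type*} [LinearOrder A] (p s t : List A) :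
    List.Lex (·<·) (p ++ s) (p ++ t) ↔ List.Lex (·<·) s t := by
  induction p with
  | nil => rfl
  | cons a p ih => simpa [List.lex_cons_iff] using ih

private lemma lex_of_take_eq' {A : Type*} [LinearOrder A] {i : ℕ} {x y : List A} {c d : A}
    (ht : x.take i = y.take i) (hx : x[i]? = some c) (hy : y[i]? = some d) (h : c < d) :
    List.Lex (·<·) x y := by
  have hix : i < x.length := by
    by_contra hh
    rw [List.getElem?_eq_none (by omega)] at hx; exact absurd hx (by simp)
  have hiy : i < y.length := by
    by_contra hh
    rw [List.getElem?_eq_none (by omega)] at hy; exact absurd hy (by simp)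
  have hx' : x[i] = c := by rw [List.getElem?_eq_getElem hix] at hx; exact Option.some.inj hx
  have hy' : y[i] = d := by rw [List.getElem?_eq_getElem hiy] at hy; exact Option.some.inj hy
  have ex : x = x.take i ++ (c :: x.drop (i+1)) := by
    conv_lhs => rw [← List.take_append_drop i x, List.drop_eq_getElem_cons hix, hx']
  have ey : y = y.take i ++ (d :: y.drop (i+1)) := by
    conv_lhs => rw [← List.take_append_drop i y, List.drop_eq_getElem_cons hiy, hy']
  rw [ex, ey, ← ht, lex_append_left_iff']
  exact List.Lex.rel h

/-- Let `w ∈ L(A)` of length `ℓ`, let `w'` be the lexicographically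
least word of `L(A)` of length `ℓ` with `w <_LEX w'`, and let `i` be the unique
index where `w` and `w'` first differ. Then:
(a) `w[i] < w'[i]`;
(b) `i` is the largest index `j < ℓ` admitting a letter `a > w[j]` and a word `v`
of length `ℓ-1-j` with `(w.take j)·a·v ∈ L(A)`;
(c) `w'[i]` is the least letter `a > w[i]` admitting a word `v` of length `ℓ-1-i`
with `(w.take i)·a·v ∈ L(A)`;
(d) `w'.drop (i+1)` is the lexicographically least word `v` of length `ℓ-1-i` with
`(w.take i)·w'[i]·v ∈ L(A)`. -/
theorem nextWord_characterization {Q A : Type*} [Fintype Q] [Fintype A] [LinearOrder A]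
    (Δ : Set (Q × A × Q)) (I F : Set Q) (ℓ : ℕ) (w w' : List A)
    (hw : InLang Δ I F w) (hwlen : w.length = ℓ)
    (hw' : InLang Δ I F w') (hw'len : w'.length = ℓ)
    (hlex : List.Lex (· < ·) w w')
    (hleast : ∀ v : List A, InLang Δ I F v → v.length = ℓ →
      List.Lex (· < ·) w v → LexLe w' v)
    (i : ℕ) (htake : w.take i = w'.take i) (hne : w[i]? ≠ w'[i]?) :
    -- (a)
    (∃ b b' : A, w[i]? = some b ∧ w'[i]? = some b' ∧ b < b') ∧
    -- (b)
    (i < ℓ ∧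
      (∃ (a b : A), w[i]? = some b ∧ b < a ∧
        ∃ v : List A, v.length = ℓ - 1 - i ∧ InLang Δ I F (w.take i ++ a :: v)) ∧
      (∀ j, j < ℓ →
        (∃ (a b : A), w[j]? = some b ∧ b < a ∧
          ∃ v : List A, v.length = ℓ - 1 - j ∧ InLang Δ I F (w.take j ++ a :: v)) →
        j ≤ i)) ∧
    -- (c)
    (∃ b b' : A, w[i]? = some b ∧ w'[i]? = some b' ∧ b < b' ∧
      (∃ v : List A, v.length = ℓ - 1 - i ∧ InLang Δ I F (w.take i ++ b' :: v)) ∧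
      (∀ a : A, b < a →
        (∃ v : List A, v.length = ℓ - 1 - i ∧ InLang Δ I F (w.take i ++ a :: v)) →
        b' ≤ a)) ∧
    -- (d)
    (∃ b' : A, w'[i]? = some b' ∧
      (w'.drop (i + 1)).length = ℓ - 1 - i ∧
      InLang Δ I F (w.take i ++ b' :: w'.drop (i + 1)) ∧
      (∀ v : List A, v.length = ℓ - 1 - i →
        InLang Δ I F (w.take i ++ b' :: v) → LexLe (w'.drop (i + 1)) v)) := by
  have hiℓ : i < ℓ := by
    by_contra hh
    push_neg at hh
    exact hne (by rw [List.getElem?_eq_none (by omega), List.getElem?_eq_none (by omega)])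
  have hiw : i < w.length := by omega
  have hiw' : i < w'.length := by omega
  obtain ⟨b, hbv⟩ : ∃ x, w[i] = x := ⟨_, rfl⟩
  obtain ⟨b', hb'v⟩ : ∃ x, w'[i] = x := ⟨_, rfl⟩
  have hb : w[i]? = some b := by rw [← hbv]; exact List.getElem?_eq_getElem hiw
  have hb' : w'[i]? = some b' := by rw [← hb'v]; exact List.getElem?_eq_getElem hiw'
  have hbb' : b < b' := by
    rcases lt_trichotomy b b' with h | h | h
    · exact h
    · exact absurd (by rw [hb, hb', h]) hne
    · exact absurd (lex_of_take_eq' htake.symm hb' hb h) (fun hh => lex_asymm' hlex hh)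
  have hplen : (w.take i).length = i := by simp [List.length_take]; omega
  have hrec : w.take i ++ b' :: w'.drop (i+1) = w' := by
    rw [htake, ← hb'v]
    conv_rhs => rw [← List.take_append_drop i w', List.drop_eq_getElem_cons hiw']
  have hdroplen : (w'.drop (i+1)).length = ℓ - 1 - i := by
    simp [List.length_drop, hw'len]; omega
  -- generic facts about u = w.take i ++ a :: v
  have hufacts : ∀ (a : A) (v : List A), v.length = ℓ - 1 - i →
      ((w.take i ++ a :: v).take i = w.take i ∧
       (w.take i ++ a :: v)[i]? = some a ∧
       (w.take i ++ a :: v).length = ℓ) := by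
    intro a v hvlen
    refine ⟨?_, ?_, ?_⟩
    · rw [List.take_append]
      simp [hplen, List.take_take]
    · rw [List.getElem?_append_right (by omega)]
      simp [hplen]
    · simp [hplen, hvlen]; omega
  refine ⟨⟨b, b', hb, hb', hbb'⟩, ⟨hiℓ, ?_, ?_⟩, ⟨b, b', hb, hb', hbb', ?_, ?_⟩,
    ⟨b', hb', hdroplen, by rw [hrec]; exact hw', ?_⟩⟩
  · -- (b) existence
    exact ⟨b', b, hb, hbb', w'.drop (i+1), hdroplen, by rw [hrec]; exact hw'⟩
  · -- (b) maximality
    rintro j hjℓ ⟨a, c, hc, hca, v, hvlen, hvL⟩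
    by_contra hh
    push_neg at hh
    have hjw : j < w.length := by omega
    have hqlen : (w.take j).length = j := by simp [List.length_take]; omega
    set u := w.take j ++ a :: v with hu
    have hutakej : u.take j = w.take j := by
      rw [hu, List.take_append]
      simp [hqlen, List.take_take]
    have huj : u[j]? = some a := by
      rw [hu, List.getElem?_append_right (by omega)]
      simp [hqlen]
    have hutakei : u.take i = w.take i := by
      rw [hu, List.take_append]
      have h0 : i - (w.take j).length = 0 := by omega
      rw [h0, List.take_take]
      simp [min_eq_left (le_of_lt hh)]
    have hui : u[i]? = some b := by
      rw [hu, List.getElem?_append, if_pos (by simpa [hqlen] using hh), List.getElem?_take,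
        if_pos hh]
      exact hb
    have hulen : u.length = ℓ := by simp [hu, hqlen, hvlen]; omega
    have hwu : List.Lex (· < ·) w u := lex_of_take_eq' hutakej.symm hc huj hca
    rcases hleast u hvL hulen hwu with heq | hlt
    · rw [← heq] at hui
      exact absurd (Option.some.inj (hb'.symm.trans hui)) (ne_of_gt hbb')
    · exact lex_asymm' (lex_of_take_eq' (hutakei.trans htake) hui hb' hbb') hlt
  · -- (c) existence
    exact ⟨w'.drop (i+1), hdroplen, by rw [hrec]; exact hw'⟩
  · -- (c) minimality
    rintro a hba ⟨v, hvlen, hvL⟩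
    obtain ⟨hutakei, hui, hulen⟩ := hufacts a v hvlen
    have hwu : List.Lex (· < ·) w (w.take i ++ a :: v) := lex_of_take_eq' hutakei.symm hb hui hba
    rcases hleast _ hvL hulen hwu with heq | hlt
    · rw [← heq] at hui
      exact le_of_eq (Option.some.inj (hb'.symm.trans hui))
    · by_contra hcon
      push_neg at hcon
      exact lex_asymm' (lex_of_take_eq' (hutakei.trans htake) hui hb' hcon) hlt
  · -- (d) minimality
    rintro v hvlen hvL
    obtain ⟨hutakei, hui, hulen⟩ := hufacts b' v hvlen
    have hwu : List.Lex (· < ·) w (w.take i ++ b' :: v) :=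
      lex_of_take_eq' hutakei.symm hb hui hbb'
    have ew' : w' = (w.take i ++ [b']) ++ w'.drop (i+1) := by
      rw [List.append_assoc]; exact hrec.symm
    have eu : w.take i ++ b' :: v = (w.take i ++ [b']) ++ v := by
      simp
    rcases hleast _ hvL hulen hwu with heq | hlt
    · left
      have h2 := (ew'.symm.trans heq).trans eu
      exact List.append_cancel_left h2
    · right
      rw [ew', eu, lex_append_left_iff'] at hlt
      exact hlt
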